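/- Let G be a graph on vertices {v_1,...,v_n} and H_G the hypergraph on vertex set A ∪ B with A = V(G), B = {b_1,b_2,b_3}, and edges: {v_i, b_k} for all i,k; {v_i, v_j, b_k} for each edge v_i v_j of G and each k; and X ∪ {b_k} for every X ⊆ A with |X| >= 3 and each k. Then A and B are the only minimal set covers of H_G; in particular tau(H_G) = 3. -/

import Mathlib

open Finset

/-- Position at which hyperedge `e` is first hit by the ordering `σ`. -/
noncomputable def firstHit {α : Type*} (σ : α → ℕ) (e : Finset α) : ℕ :=
  sInf (σ '' ↑e)

/-- Total cost of an ordering: each edge pays the position of its first vertex. -/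
noncomputable def totalCost {α : Type*} (E : Finset (Finset α)) (σ : α → ℕ) : ℕ :=
  ∑ e ∈ E, firstHit σ e

open scoped Classical in
/-- Effective coverage of position `i`: the number of edges first hit at `i`. -/
noncomputable def coverage {α : Type*} (E : Finset (Finset α)) (σ : α → ℕ) (i : ℕ) : ℕ :=
  (E.filter fun e => firstHit σ e = i).card

/-- An ordering of the vertex set `V`: a bijection onto positions `{1, ..., |V|}`. -/
def IsOrdering {α : Type*} (V : Finset α) (σ : α → ℕ) : Prop :=
  Set.BijOn σ ↑V (Set.Icc 1 V.card)


/-- A set cover: a set of vertices intersecting every hyperedge. -/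
def IsSetCover {α : Type*} [DecidableEq α] (E : Finset (Finset α)) (S : Finset α) : Prop :=
  ∀ e ∈ E, (e ∩ S).Nonempty

/-- The edge set of the hypergraph `H_G` associated with a graph `G` on `Fin n`:
vertices are `A ∪ B` with `A = V(G)` (embedded by `Sum.inl`) and `B = {b₁, b₂, b₃}`
(embedded by `Sum.inr`); edges are `{vᵢ, b_k}`, `{vᵢ, vⱼ, b_k}` for `vᵢvⱼ ∈ E(G)`,
and `X ∪ {b_k}` for `X ⊆ A` with `|X| ≥ 3`. -/
def IsHG {n : ℕ} (G : SimpleGraph (Fin n)) (E : Finset (Finset (Fin n ⊕ Fin 3))) : Prop :=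
  ∀ e : Finset (Fin n ⊕ Fin 3),
    e ∈ E ↔
      (∃ (i : Fin n) (k : Fin 3), e = {Sum.inl i, Sum.inr k}) ∨
      (∃ (i j : Fin n) (k : Fin 3), G.Adj i j ∧ e = {Sum.inl i, Sum.inl j, Sum.inr k}) ∨
      (∃ X : Finset (Fin n), 3 ≤ X.card ∧ ∃ k : Fin 3, e = X.image Sum.inl ∪ {Sum.inr k})

/-- In `H_G`, the sets `A` and `B` are the only minimal set covers; in particular
`τ(H_G) = 3`. -/
theorem stmt_10 (n : ℕ) (hn : 3 ≤ n) (G : SimpleGraph (Fin n))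
    (E : Finset (Finset (Fin n ⊕ Fin 3))) (hHG : IsHG G E) :
    (∀ S : Finset (Fin n ⊕ Fin 3),
      (IsSetCover E S ∧ ∀ T ⊂ S, ¬ IsSetCover E T) ↔
        (S = (Finset.univ : Finset (Fin n)).image Sum.inl ∨
         S = (Finset.univ : Finset (Fin 3)).image Sum.inr)) ∧
    (∃ S : Finset (Fin n ⊕ Fin 3), IsSetCover E S ∧ S.card = 3) ∧
    (∀ S : Finset (Fin n ⊕ Fin 3), IsSetCover E S → 3 ≤ S.card) := by
  classical
  set A : Finset (Fin n ⊕ Fin 3) := (Finset.univ : Finset (Fin n)).image Sum.inl with hA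
  set B : Finset (Fin n ⊕ Fin 3) := (Finset.univ : Finset (Fin 3)).image Sum.inr with hB
  have hAmem : ∀ i : Fin n, Sum.inl i ∈ A := fun i => mem_image_of_mem _ (mem_univ i)
  have hBmem : ∀ k : Fin 3, Sum.inr k ∈ B := fun k => mem_image_of_mem _ (mem_univ k)
  have hAonly : ∀ x ∈ A, ∃ i, x = Sum.inl i := by
    intro x hx
    rw [hA, mem_image] at hx
    obtain ⟨i, _, hi⟩ := hx
    exact ⟨i, hi.symm⟩
  have hBonly : ∀ x ∈ B, ∃ k, x = Sum.inr k := by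
    intro x hx
    rw [hB, mem_image] at hx
    obtain ⟨k, _, hk⟩ := hx
    exact ⟨k, hk.symm⟩
  have coverA : IsSetCover E A := by
    intro e he
    rcases (hHG e).1 he with ⟨i, k, rfl⟩ | ⟨i, j, k, hij, rfl⟩ | ⟨X, hX, k, rfl⟩
    · exact ⟨Sum.inl i, by simp [hAmem i]⟩
    · exact ⟨Sum.inl i, by simp [hAmem i]⟩
    · obtain ⟨x, hx⟩ := Finset.card_pos.mp (by omega : 0 < X.card)
      exact ⟨Sum.inl x, by simp [hAmem x, hx]⟩
  have coverB : IsSetCover E B := by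
    intro e he
    rcases (hHG e).1 he with ⟨i, k, rfl⟩ | ⟨i, j, k, hij, rfl⟩ | ⟨X, hX, k, rfl⟩
    · exact ⟨Sum.inr k, by simp [hBmem k]⟩
    · exact ⟨Sum.inr k, by simp [hBmem k]⟩
    · exact ⟨Sum.inr k, by simp [hBmem k]⟩
  have edge1 : ∀ (i : Fin n) (k : Fin 3), ({Sum.inl i, Sum.inr k} : Finset (Fin n ⊕ Fin 3)) ∈ E :=
    fun i k => (hHG _).2 (Or.inl ⟨i, k, rfl⟩)
  have edgeX : ∀ k : Fin 3,
      ((Finset.univ : Finset (Fin n)).image Sum.inl ∪ {Sum.inr k}) ∈ E :=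
    fun k => (hHG _).2 (Or.inr (Or.inr ⟨Finset.univ, by simpa using hn, k, rfl⟩))
  have cardA : A.card = n := by
    rw [hA, Finset.card_image_of_injective _ Sum.inl_injective, Finset.card_univ, Fintype.card_fin]
  have cardB : B.card = 3 := by
    rw [hB, Finset.card_image_of_injective _ Sum.inr_injective, Finset.card_univ, Fintype.card_fin]
  have hsub : ∀ S, IsSetCover E S → A ⊆ S ∨ B ⊆ S := by
    intro S hS
    by_cases hb : B ⊆ S
    · exact Or.inr hb
    · left
      obtain ⟨k, hk⟩ : ∃ k : Fin 3, Sum.inr k ∉ S := by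
        by_contra h
        push_neg at h
        refine hb fun x hx => ?_
        obtain ⟨k, rfl⟩ := hBonly x hx
        exact h k
      intro x hx
      obtain ⟨i, rfl⟩ := hAonly x hx
      obtain ⟨y, hy⟩ := hS _ (edge1 i k)
      rw [mem_inter, mem_insert, mem_singleton] at hy
      rcases hy with ⟨rfl | rfl, hyS⟩
      · exact hyS
      · exact absurd hyS hk
  have minA : ∀ T ⊂ A, ¬ IsSetCover E T := by
    intro T hT hTc
    obtain ⟨x, hxA, hxT⟩ := Finset.exists_of_ssubset hT
    obtain ⟨i, rfl⟩ := hAonly x hxA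
    obtain ⟨y, hy⟩ := hTc _ (edge1 i 0)
    rw [mem_inter, mem_insert, mem_singleton] at hy
    rcases hy with ⟨rfl | rfl, hyT⟩
    · exact hxT hyT
    · obtain ⟨j, hj⟩ := hAonly _ (hT.subset hyT)
      exact nomatch hj
  have minB : ∀ T ⊂ B, ¬ IsSetCover E T := by
    intro T hT hTc
    obtain ⟨x, hxB, hxT⟩ := Finset.exists_of_ssubset hT
    obtain ⟨k, rfl⟩ := hBonly x hxB
    obtain ⟨y, hy⟩ := hTc _ (edgeX k)
    rw [mem_inter, mem_union, mem_singleton, mem_image] at hy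
    rcases hy with ⟨⟨j, _, rfl⟩ | rfl, hyT⟩
    · obtain ⟨k', hk'⟩ := hBonly _ (hT.subset hyT)
      exact nomatch hk'
    · exact hxT hyT
  refine ⟨?_, ⟨B, coverB, cardB⟩, ?_⟩
  · intro S
    constructor
    · rintro ⟨hS, hmin⟩
      rcases hsub S hS with h | h
      · left
        by_contra hne
        exact hmin A (h.ssubset_of_ne fun hAS => hne hAS.symm) coverA
      · right
        by_contra hne
        exact hmin B (h.ssubset_of_ne fun hBS => hne hBS.symm) coverB
    · rintro (rfl | rfl)
      · exact ⟨coverA, minA⟩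
      · exact ⟨coverB, minB⟩
  · intro S hS
    rcases hsub S hS with h | h
    · have := Finset.card_le_card h
      omega
    · have := Finset.card_le_card h
      omega
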